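/- (Lemma l52, non-voidness at the vertex.) Let 𝒩 = N_a + N_b, N_a < N_b, κ : ℤ → ℝ periodic mod 𝒩 with κ_1 < ... < κ_𝒩, and g_{l,m,n} = (κ_l − κ_m)(κ_n − κ_{n+N_b})(κ_l + κ_m − κ_n − κ_{n+N_b}). Fix m ∈ {1,...,𝒩} and let Q_m = (κ_m, κ_m²). Then for every k with m + N_b − N_a + 1 ≤ k ≤ m + N_a − 1 (indices mod 𝒩, this range assumed nonempty, i.e., N_b < 2N_a − 1), one has 𝑞̃_{k+N_a,k}(Q_m) = −g_{k+N_a, m, k+N_a} > 0, where 𝑞̃_{ab}(q) = (κ_a − κ_b)(q_2 − (κ_a + κ_b)q_1 + κ_a κ_b). -/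
import Mathlib


/-- Lemma l52, non-voidness at the vertex: 𝑞̃_{k+N_a,k}(Q_m) = −g_{k+N_a,m,k+N_a} > 0. -/
theorem stmt_12 (Na Nb : ℕ) (hNa : 1 ≤ Na) (hNaNb : Na < Nb) (hNb2 : Nb < 2 * Na - 1)
    (N : ℕ) (hN : N = Na + Nb)
    (κ : ℤ → ℝ)
    (hper : ∀ n : ℤ, κ (n + N) = κ n)
    (hmono : ∀ m n : ℤ, 1 ≤ m → m < n → n ≤ N → κ m < κ n)
    (g : ℤ → ℤ → ℤ → ℝ)
    (hg : ∀ l m n : ℤ,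
      g l m n = (κ l - κ m) * (κ n - κ (n + Nb)) * (κ l + κ m - κ n - κ (n + Nb)))
    (qt : ℤ → ℤ → ℝ × ℝ → ℝ)
    (hqt : ∀ a b q, qt a b q = (κ a - κ b) * (q.2 - (κ a + κ b) * q.1 + κ a * κ b))
    (m : ℤ) (hm₁ : 1 ≤ m) (hm₂ : m ≤ N)
    (k : ℤ) (hk₁ : m + Nb - Na + 1 ≤ k) (hk₂ : k ≤ m + Na - 1) :
    qt (k + Na) k (κ m, κ m ^ 2) = - g (k + Na) m (k + Na) ∧
      0 < qt (k + Na) k (κ m, κ m ^ 2) := by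
  have hper' : ∀ n : ℤ, κ n = κ (n - N) := by
    intro n
    have := hper (n - N)
    simpa using this
  have hwrap : κ (k + (Na : ℤ) + (Nb : ℤ)) = κ k := by
    have h : k + (Na : ℤ) + (Nb : ℤ) = k + (N : ℤ) := by push_cast [hN]; ring
    rw [h, hper]
  have heq : qt (k + Na) k (κ m, κ m ^ 2) = - g (k + Na) m (k + Na) := by
    rw [hqt, hg, hwrap]
    ring
  refine ⟨heq, ?_⟩
  rw [hqt]
  dsimp only
  set A := κ m with hA
  set B := κ k with hB
  set C := κ (k + (Na : ℤ)) with hC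
  rcases le_or_gt (k + (Na : ℤ)) (N : ℤ) with h2 | h2
  · -- no wrap : A < B < C
    have hAB : A < B := hmono m k hm₁ (by omega) (by omega)
    have hBC : B < C := hmono k (k + Na) (by omega) (by omega) h2
    nlinarith [mul_pos (sub_pos.2 hBC)
      (mul_pos_of_neg_of_neg (sub_neg.2 (hAB.trans hBC)) (sub_neg.2 hAB))]
  · rcases le_or_gt k (N : ℤ) with h1 | h1
    · -- wrap between k and k + Na : C < A < B
      have hC' : C = κ (k + (Na : ℤ) - N) := hper' (k + (Na : ℤ))
      have hCA : C < A := by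
        rw [hC']
        exact hmono (k + (Na : ℤ) - N) m (by omega) (by omega) hm₂
      have hAB : A < B := hmono m k hm₁ (by omega) h1
      nlinarith [mul_pos_of_neg_of_neg (sub_neg.2 (hCA.trans hAB))
        (mul_neg_of_pos_of_neg (sub_pos.2 hCA) (sub_neg.2 hAB))]
    · -- wrap between m and k : B < C < A
      have hB' : B = κ (k - N) := hper' k
      have hC' : C = κ (k + (Na : ℤ) - N) := hper' (k + (Na : ℤ))
      have hBC : B < C := by
        rw [hB', hC']
        exact hmono (k - N) (k + (Na : ℤ) - N) (by omega) (by omega) (by omega)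
      have hCA : C < A := by
        rw [hC']
        exact hmono (k + (Na : ℤ) - N) m (by omega) (by omega) hm₂
      nlinarith [mul_pos (sub_pos.2 hBC)
        (mul_pos (sub_pos.2 hCA) (sub_pos.2 (hBC.trans hCA)))]
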